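/- Let 0 < t < s. For every function f : (ℕ → ℝ) → ℝ with MemLp f 2 γ_s^∞, the heat operator H_t f defined by (H_t f)(x) = ∫ f(x + y) dγ_t^∞(y) satisfies eLpNorm (H_t f) 2 γ_{s-t}^∞ ≤ eLpNorm f 2 γ_s^∞; that is, the heat operator is a contraction from L²(γ_s^∞) to L²(γ_{s-t}^∞). -/

import Mathlib

open MeasureTheory ProbabilityTheory Real
open scoped ENNReal NNReal

lemma gaussianPDFReal_mul_eq (a b : ℝ≥0) (ha : a ≠ 0) (hb : b ≠ 0) (z x : ℝ) :
    gaussianPDFReal 0 a x * gaussianPDFReal x b z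
      = ((√(2 * π * a))⁻¹ * (√(2 * π * b))⁻¹ * rexp (- z ^ 2 / (2 * (a + b))))
        * rexp (-((a + b) / (2 * a * b)) * (x - a * z / (a + b)) ^ 2) := by
  have hA : (0:ℝ) < a := lt_of_le_of_ne a.coe_nonneg (by exact_mod_cast (Ne.symm ha))
  have hB : (0:ℝ) < b := lt_of_le_of_ne b.coe_nonneg (by exact_mod_cast (Ne.symm hb))
  simp only [gaussianPDFReal, sub_zero]
  rw [mul_mul_mul_comm, ← Real.exp_add, mul_assoc _ (rexp _) (rexp _), ← Real.exp_add]
  congr 1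
  rw [Real.exp_eq_exp]
  have h1 : (a:ℝ) + b ≠ 0 := by positivity
  field_simp
  ring

lemma integrable_gauss_conv (a b : ℝ≥0) (ha : a ≠ 0) (hb : b ≠ 0) (z : ℝ) :
    Integrable (fun x => gaussianPDFReal 0 a x * gaussianPDFReal x b z) := by
  have hA : (0:ℝ) < a := lt_of_le_of_ne a.coe_nonneg (by exact_mod_cast (Ne.symm ha))
  have hB : (0:ℝ) < b := lt_of_le_of_ne b.coe_nonneg (by exact_mod_cast (Ne.symm hb))
  simp_rw [gaussianPDFReal_mul_eq a b ha hb z]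
  have hk : (0:ℝ) < (a + b) / (2 * a * b) := by positivity
  exact ((integrable_exp_neg_mul_sq hk).comp_sub_right ((a:ℝ) * z / (a + b))).const_mul _

lemma gaussianPDFReal_conv (a b : ℝ≥0) (ha : a ≠ 0) (hb : b ≠ 0) (z : ℝ) :
    ∫ x, gaussianPDFReal 0 a x * gaussianPDFReal x b z = gaussianPDFReal 0 (a + b) z := by
  have hA : (0:ℝ) < a := lt_of_le_of_ne a.coe_nonneg (by exact_mod_cast (Ne.symm ha))
  have hB : (0:ℝ) < b := lt_of_le_of_ne b.coe_nonneg (by exact_mod_cast (Ne.symm hb))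
  simp_rw [gaussianPDFReal_mul_eq a b ha hb z]
  rw [integral_const_mul]
  have hk : (0:ℝ) < (a + b) / (2 * a * b) := by positivity
  rw [integral_sub_right_eq_self (fun u => rexp (-((a + b) / (2 * a * b)) * u ^ 2))
    ((a:ℝ) * z / (a + b)), integral_gaussian]
  have hc : (√(2 * π * (a:ℝ)))⁻¹ * (√(2 * π * (b:ℝ)))⁻¹ * √(π / ((a + b) / (2 * a * b)))
      = (√(2 * π * ((a:ℝ) + b)))⁻¹ := by
    rw [← Real.sqrt_inv, ← Real.sqrt_inv, ← Real.sqrt_inv,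
      ← Real.sqrt_mul (by positivity), ← Real.sqrt_mul (by positivity)]
    congr 1
    field_simp
  rw [gaussianPDFReal, NNReal.coe_add, sub_zero]
  rw [mul_right_comm _ (rexp _), hc]

lemma measurable_gaussianPDF_left (b : ℝ≥0) :
    Measurable (fun p : ℝ × ℝ => gaussianPDF p.1 b p.2) := by
  have : (fun p : ℝ × ℝ => gaussianPDF p.1 b p.2)
      = fun p => ENNReal.ofReal ((√(2 * π * b))⁻¹ * rexp (-(p.2 - p.1) ^ 2 / (2 * b))) := rfl
  rw [this]
  exact ((((measurable_snd.sub measurable_fst).pow_const 2).neg.div_const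
    _).exp.const_mul _).ennreal_ofReal

lemma gaussianReal_conv (a b : ℝ≥0) (ha : a ≠ 0) (hb : b ≠ 0) :
    ((gaussianReal 0 a).prod (gaussianReal 0 b)).map (fun p : ℝ × ℝ => p.1 + p.2)
      = gaussianReal 0 (a + b) := by
  have hab : a + b ≠ 0 := fun h => ha (by simpa using (add_eq_zero.mp h).1)
  ext s hs
  rw [Measure.map_apply measurable_add hs, Measure.prod_apply (measurable_add hs)]
  have h1 : ∀ x : ℝ, (gaussianReal 0 b) (Prod.mk x ⁻¹' ((fun p : ℝ × ℝ => p.1 + p.2) ⁻¹' s))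
      = ∫⁻ z in s, gaussianPDF x b z := by
    intro x
    have h2 : Prod.mk x ⁻¹' ((fun p : ℝ × ℝ => p.1 + p.2) ⁻¹' s) = (fun y => x + y) ⁻¹' s := rfl
    rw [h2, ← Measure.map_apply (measurable_const_add x) hs, gaussianReal_map_const_add,
      zero_add, gaussianReal_apply _ hb s]
  simp_rw [h1]
  have hmb : Measurable fun x => ∫⁻ z in s, gaussianPDF x b z := by
    simp_rw [← lintegral_indicator hs]
    exact Measurable.lintegral_prod_right
      ((measurable_gaussianPDF_left b).indicator (measurable_snd hs))
  rw [gaussianReal_of_var_ne_zero 0 ha,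
    lintegral_withDensity_eq_lintegral_mul _ (measurable_gaussianPDF 0 a) hmb]
  have key : ∀ z, ∫⁻ x, gaussianPDF 0 a x * gaussianPDF x b z = gaussianPDF 0 (a + b) z := by
    intro z
    simp_rw [gaussianPDF, ← ENNReal.ofReal_mul (gaussianPDFReal_nonneg 0 a _)]
    rw [← ofReal_integral_eq_lintegral_ofReal (integrable_gauss_conv a b ha hb z)
      (Filter.Eventually.of_forall fun x => mul_nonneg (gaussianPDFReal_nonneg _ _ _)
        (gaussianPDFReal_nonneg _ _ _)),
      gaussianPDFReal_conv a b ha hb z]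
  calc ∫⁻ x, gaussianPDF 0 a x * ∫⁻ z in s, gaussianPDF x b z
      = ∫⁻ x, ∫⁻ z in s, gaussianPDF 0 a x * gaussianPDF x b z := by
        congr 1; ext x; exact (lintegral_const_mul' (gaussianPDF 0 a x) _ ENNReal.ofReal_ne_top).symm
    _ = ∫⁻ z in s, ∫⁻ x, gaussianPDF 0 a x * gaussianPDF x b z := by
        apply lintegral_lintegral_swap
        exact (((measurable_gaussianPDF 0 a).comp measurable_fst).mul
          ((measurable_gaussianPDF_left b).comp
            (measurable_fst.prodMk measurable_snd))).aemeasurable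
    _ = ∫⁻ z in s, gaussianPDF 0 (a + b) z := by simp_rw [key]
    _ = gaussianReal 0 (a + b) s := (gaussianReal_apply 0 hab s).symm

lemma pi_map_comp {ι : Type*} [Fintype ι] {α β : ι → Type*} [∀ i, MeasurableSpace (α i)]
    [∀ i, MeasurableSpace (β i)] (μ : ∀ i, Measure (α i)) [∀ i, IsProbabilityMeasure (μ i)]
    (g : ∀ i, α i → β i) (hg : ∀ i, Measurable (g i)) :
    (Measure.pi μ).map (fun x i => g i (x i)) = Measure.pi (fun i => (μ i).map (g i)) := by
  haveI : ∀ i, IsProbabilityMeasure ((μ i).map (g i)) :=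
    fun i => Measure.isProbabilityMeasure_map (hg i).aemeasurable
  refine (Measure.pi_eq fun s hs => ?_).symm
  have hm : Measurable (fun (x : ∀ i, α i) i => g i (x i)) :=
    measurable_pi_lambda _ fun i => (hg i).comp (measurable_pi_apply i)
  rw [Measure.map_apply hm (MeasurableSet.univ_pi hs)]
  have : (fun x i => g i (x i)) ⁻¹' Set.univ.pi s = Set.univ.pi (fun i => g i ⁻¹' s i) := by
    ext x; simp
  rw [this, Measure.pi_pi]
  exact Finset.prod_congr rfl fun i _ => (Measure.map_apply (hg i) (hs i)).symm

lemma pi_gauss_conv (n : ℕ) (a b : ℝ≥0) (ha : a ≠ 0) (hb : b ≠ 0) :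
    ((Measure.pi fun _ : Fin n => gaussianReal 0 a).prod
        (Measure.pi fun _ : Fin n => gaussianReal 0 b)).map (fun q => q.1 + q.2)
      = Measure.pi (fun _ : Fin n => gaussianReal 0 (a + b)) := by
  have he := (measurePreserving_arrowProdEquivProdArrow ℝ ℝ (Fin n)
    (fun _ => gaussianReal 0 a) (fun _ => gaussianReal 0 b)).map_eq
  rw [← he, Measure.map_map (by
      exact measurable_pi_lambda _ fun i =>
        ((measurable_pi_apply i).comp measurable_fst).add
          ((measurable_pi_apply i).comp measurable_snd))
    (MeasurableEquiv.arrowProdEquivProdArrow ℝ ℝ (Fin n)).measurable]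
  have hcomp : ((fun q : (Fin n → ℝ) × (Fin n → ℝ) => q.1 + q.2) ∘
      (MeasurableEquiv.arrowProdEquivProdArrow ℝ ℝ (Fin n)))
      = fun (x : Fin n → ℝ × ℝ) i => (x i).1 + (x i).2 := rfl
  rw [hcomp]
  refine (pi_map_comp _ (fun (_ : Fin n) (p : ℝ × ℝ) => p.1 + p.2) (fun _ => measurable_add)).trans ?_
  exact congrArg _ (funext fun _ => gaussianReal_conv a b ha hb)

def cylSets : Set (Set (ℕ → ℝ)) :=
  {A | ∃ n : ℕ, ∃ S : Set (Fin n → ℝ), MeasurableSet S ∧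
    A = (fun x (i : Fin n) => x (i : ℕ)) ⁻¹' S}

lemma measurable_restrictFin (n : ℕ) : Measurable (fun (x : ℕ → ℝ) (i : Fin n) => x (i : ℕ)) :=
  measurable_pi_lambda _ fun i => measurable_pi_apply _

lemma restrictFin_comp {n m : ℕ} (h : n ≤ m) :
    (fun (x : ℕ → ℝ) (i : Fin n) => x (i : ℕ))
      = (fun (y : Fin m → ℝ) (i : Fin n) => y (Fin.castLE h i)) ∘
        (fun (x : ℕ → ℝ) (i : Fin m) => x (i : ℕ)) := by
  funext x
  simp [Function.comp, Fin.coe_castLE]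

lemma isPiSystem_cylSets : IsPiSystem cylSets := by
  rintro A ⟨n, S, hS, rfl⟩ B ⟨m, T, hT, rfl⟩ -
  rcases le_total n m with h | h
  · have hproj : Measurable fun (y : Fin m → ℝ) (i : Fin n) => y (Fin.castLE h i) :=
      measurable_pi_lambda _ fun i => measurable_pi_apply _
    refine ⟨m, (fun y (i : Fin n) => y (Fin.castLE h i)) ⁻¹' S ∩ T, (hproj hS).inter hT, ?_⟩
    rw [Set.preimage_inter, ← Set.preimage_comp, ← restrictFin_comp h]
  · have hproj : Measurable fun (y : Fin n → ℝ) (i : Fin m) => y (Fin.castLE h i) :=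
      measurable_pi_lambda _ fun i => measurable_pi_apply _
    refine ⟨n, S ∩ (fun y (i : Fin m) => y (Fin.castLE h i)) ⁻¹' T, hS.inter (hproj hT), ?_⟩
    rw [Set.preimage_inter, ← Set.preimage_comp, ← restrictFin_comp h]

lemma generateFrom_cylSets :
    MeasurableSpace.generateFrom cylSets = (inferInstance : MeasurableSpace (ℕ → ℝ)) := by
  refine le_antisymm (MeasurableSpace.generateFrom_le ?_) ?_
  · rintro A ⟨n, S, hS, rfl⟩
    exact measurable_restrictFin n hS
  · have : (inferInstance : MeasurableSpace (ℕ → ℝ)) = MeasurableSpace.pi := rfl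
    rw [this, MeasurableSpace.pi]
    refine iSup_le fun i => ?_
    rw [← measurable_iff_comap_le]
    intro s hs
    refine MeasurableSpace.measurableSet_generateFrom
      ⟨i + 1, (fun y : Fin (i + 1) → ℝ => y ⟨i, Nat.lt_succ_self i⟩) ⁻¹' s,
        measurable_pi_apply _ hs, ?_⟩
    rfl

lemma measure_ext_of_marginals (μ ν : Measure (ℕ → ℝ)) [IsProbabilityMeasure μ]
    [IsProbabilityMeasure ν]
    (h : ∀ n : ℕ, μ.map (fun x (i : Fin n) => x (i : ℕ)) =
      ν.map (fun x (i : Fin n) => x (i : ℕ))) : μ = ν := by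
  refine ext_of_generate_finite cylSets generateFrom_cylSets.symm isPiSystem_cylSets ?_ (by simp)
  rintro A ⟨n, S, hS, rfl⟩
  rw [← Measure.map_apply (measurable_restrictFin n) hS,
    ← Measure.map_apply (measurable_restrictFin n) hS, h n]

lemma sq_lintegral_le {α : Type*} [MeasurableSpace α] (μ : Measure α) [IsProbabilityMeasure μ]
    {h : α → ℝ≥0∞} (hm : AEMeasurable h μ) :
    (∫⁻ y, h y ∂μ) ^ (2 : ℝ) ≤ ∫⁻ y, h y ^ (2 : ℝ) ∂μ := by
  have hpq : Real.HolderConjugate 2 2 := Real.HolderConjugate.two_two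
  have hcs := ENNReal.lintegral_mul_le_Lp_mul_Lq μ hpq hm (aemeasurable_const (b := (1 : ℝ≥0∞)))
  simp only [Pi.mul_apply, mul_one, ENNReal.one_rpow, lintegral_one, measure_univ,
    ENNReal.one_rpow, mul_one, one_mul] at hcs
  calc (∫⁻ y, h y ∂μ) ^ (2 : ℝ)
      ≤ ((∫⁻ y, h y ^ (2:ℝ) ∂μ) ^ (1 / 2 : ℝ)) ^ (2 : ℝ) :=
        ENNReal.rpow_le_rpow hcs (by norm_num)
    _ = ∫⁻ y, h y ^ (2:ℝ) ∂μ := by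
        rw [← ENNReal.rpow_mul]; norm_num

/-- `IsGaussianProductMeasure r μ` says that `μ` is the countable product probability measure
`⨂_{n ∈ ℕ} gaussianReal 0 r` on `ℕ → ℝ`, characterized by the property that all of its
finite-dimensional marginals are the corresponding finite products of centered Gaussians of
variance `r`. -/
def IsGaussianProductMeasure (r : ℝ) (μ : Measure (ℕ → ℝ)) : Prop :=
  IsProbabilityMeasure μ ∧
    ∀ n : ℕ, μ.map (fun x (i : Fin n) => x (i : ℕ)) =
      Measure.pi (fun _ : Fin n => gaussianReal 0 r.toNNReal)

/-- The heat operator `e^{tΔ/2}`, given by convolution with the variance-`t` Gaussian,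
is a contraction from `L²(γ_s^∞)` to `L²(γ_{s-t}^∞)` for `0 < t < s`. -/
theorem heatOperator_contraction_L2
    (s t : ℝ) (ht : 0 < t) (hts : t < s)
    (μs μst μt : Measure (ℕ → ℝ))
    (hμs : IsGaussianProductMeasure s μs)
    (hμst : IsGaussianProductMeasure (s - t) μst)
    (hμt : IsGaussianProductMeasure t μt)
    (f : (ℕ → ℝ) → ℝ) (hf : MemLp f 2 μs) :
    eLpNorm (fun x => ∫ y, f (x + y) ∂μt) 2 μst ≤ eLpNorm f 2 μs := by
  obtain ⟨hPs, hMs⟩ := hμs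
  obtain ⟨hPst, hMst⟩ := hμst
  obtain ⟨hPt, hMt⟩ := hμt
  haveI := hPs; haveI := hPst; haveI := hPt
  have hadd : Measurable (fun p : (ℕ → ℝ) × (ℕ → ℝ) => p.1 + p.2) :=
    measurable_pi_lambda _ fun i => ((measurable_pi_apply i).comp measurable_fst).add
      ((measurable_pi_apply i).comp measurable_snd)
  have ht' : t.toNNReal ≠ 0 := (Real.toNNReal_pos.mpr ht).ne'
  have hst' : (s - t).toNNReal ≠ 0 := (Real.toNNReal_pos.mpr (by linarith)).ne'
  have hsum_var : (s - t).toNNReal + t.toNNReal = s.toNNReal := by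
    rw [← Real.toNNReal_add (by linarith) ht.le, sub_add_cancel]
  -- the sum of independent Gaussian vectors has law μs
  have hsum : (μst.prod μt).map (fun p : (ℕ → ℝ) × (ℕ → ℝ) => p.1 + p.2) = μs := by
    haveI : IsProbabilityMeasure ((μst.prod μt).map (fun p : (ℕ → ℝ) × (ℕ → ℝ) => p.1 + p.2)) :=
      Measure.isProbabilityMeasure_map hadd.aemeasurable
    refine measure_ext_of_marginals _ _ fun n => ?_
    rw [hMs n, Measure.map_map (measurable_restrictFin n) hadd]
    have hcomp : (fun x (i : Fin n) => x (i : ℕ)) ∘ (fun p : (ℕ → ℝ) × (ℕ → ℝ) => p.1 + p.2)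
        = (fun q : (Fin n → ℝ) × (Fin n → ℝ) => q.1 + q.2) ∘
          (Prod.map (fun x (i : Fin n) => x (i : ℕ)) (fun x (i : Fin n) => x (i : ℕ))) := rfl
    have haddF : Measurable (fun q : (Fin n → ℝ) × (Fin n → ℝ) => q.1 + q.2) :=
      measurable_pi_lambda _ fun i => ((measurable_pi_apply i).comp measurable_fst).add
        ((measurable_pi_apply i).comp measurable_snd)
    rw [hcomp, ← Measure.map_map haddF
      ((measurable_restrictFin n).prodMap (measurable_restrictFin n)),
      ← Measure.map_prod_map _ _ (measurable_restrictFin n) (measurable_restrictFin n),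
      hMst n, hMt n, pi_gauss_conv n _ _ hst' ht', hsum_var]
  -- replace f by a strongly measurable representative
  set f' : (ℕ → ℝ) → ℝ := hf.1.mk f with hf'def
  have hF : Measurable f' := hf.1.stronglyMeasurable_mk.measurable
  have hff' : f =ᵐ[μs] f' := hf.1.ae_eq_mk
  have hprod_ae : ∀ᵐ p ∂(μst.prod μt), f (p.1 + p.2) = f' (p.1 + p.2) := by
    have h2 := hff'
    rw [← hsum] at h2
    exact ae_of_ae_map hadd.aemeasurable h2
  have hsec : ∀ᵐ x ∂μst, ∀ᵐ y ∂μt, f (x + y) = f' (x + y) := by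
    have := Measure.ae_ae_of_ae_prod hprod_ae
    exact this
  have hg : (fun x => ∫ y, f (x + y) ∂μt) =ᵐ[μst] (fun x => ∫ y, f' (x + y) ∂μt) :=
    hsec.mono fun x hx => integral_congr_ae hx
  rw [eLpNorm_congr_ae hg, eLpNorm_congr_ae hff']
  -- now prove the inequality for the measurable representative
  rw [eLpNorm_eq_lintegral_rpow_enorm_toReal two_ne_zero ENNReal.ofNat_ne_top,
    eLpNorm_eq_lintegral_rpow_enorm_toReal two_ne_zero ENNReal.ofNat_ne_top]
  have h2 : (2 : ℝ≥0∞).toReal = (2 : ℝ) := by norm_num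
  rw [h2]
  refine ENNReal.rpow_le_rpow ?_ (by norm_num)
  have haddl : ∀ x : ℕ → ℝ, Measurable (fun y : ℕ → ℝ => x + y) := fun x =>
    measurable_pi_lambda _ fun i => by simpa using ((measurable_pi_apply i : Measurable fun y : ℕ → ℝ => y i).const_add (x i))
  calc ∫⁻ x, (‖∫ y, f' (x + y) ∂μt‖₊ : ℝ≥0∞) ^ (2:ℝ) ∂μst
      ≤ ∫⁻ x, (∫⁻ y, (‖f' (x + y)‖₊ : ℝ≥0∞) ∂μt) ^ (2:ℝ) ∂μst := by
        refine lintegral_mono fun x => ?_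
        exact ENNReal.rpow_le_rpow (enorm_integral_le_lintegral_enorm _) (by norm_num)
    _ ≤ ∫⁻ x, ∫⁻ y, (‖f' (x + y)‖₊ : ℝ≥0∞) ^ (2:ℝ) ∂μt ∂μst := by
        refine lintegral_mono fun x => ?_
        exact sq_lintegral_le μt ((hF.comp (haddl x)).nnnorm.coe_nnreal_ennreal.aemeasurable)
    _ = ∫⁻ p, (‖f' (p.1 + p.2)‖₊ : ℝ≥0∞) ^ (2:ℝ) ∂(μst.prod μt) := by
        rw [lintegral_prod]
        exact (((hF.comp hadd).nnnorm.coe_nnreal_ennreal).pow_const _).aemeasurable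
    _ = ∫⁻ z, (‖f' z‖₊ : ℝ≥0∞) ^ (2:ℝ) ∂μs := by
        rw [← hsum, lintegral_map (hF.nnnorm.coe_nnreal_ennreal.pow_const _) hadd]
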